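/- Let 𝔽_q be a finite field, χ : 𝔽_q → ℂ a nontrivial additive character, d ≥ 2, and P ∈ 𝔽_q[x₁,…,x_d] a nonconstant polynomial of degree k ≥ 1. For t ∈ 𝔽_q let H_t = {x ∈ 𝔽_q^d : P(x) = t}. Suppose that for some A > 0 one has |Σ_{x∈H_t} χ(m·x)| ≤ A·q^{(d−1)/2} for every t ∈ 𝔽_q and every m ∈ 𝔽_q^d ∖ {0}. Then for all nonempty sets E, F ⊆ 𝔽_q^d, the generalized distance set satisfies |Δ_P(E,F)| ≥ (1/2) · min( q/k , q^{−(d−1)/2} √(|E||F|) / A ); in particular |Δ_P(E,F)| ≳ min(q, q^{−(d−1)/2} √(|E||F|)). -/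

import Mathlib

open Finset MvPolynomial

lemma my_sz {F : Type} [Field F] [Fintype F] [DecidableEq F] :
    ∀ (n : ℕ) (P : MvPolynomial (Fin n) F), P ≠ 0 →
    ((univ : Finset (Fin n → F)).filter (fun x => eval x P = 0)).card * Fintype.card F
      ≤ P.totalDegree * Fintype.card F ^ n := by
  intro n
  induction n with
  | zero =>
    intro P hP
    obtain ⟨a, rfl⟩ := MvPolynomial.C_surjective (Fin 0) P
    have ha : a ≠ 0 := by simpa using hP
    have : ((univ : Finset (Fin 0 → F)).filter (fun x => eval x (C a) = 0)) = ∅ := by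
      apply filter_eq_empty_iff.mpr
      intro x _
      simpa using ha
    simp [this, ha]
  | succ n ih =>
    intro P hP
    set f := finSuccEquiv F n P with hf_def
    have hf : f ≠ 0 := by
      intro h
      apply hP
      have := congrArg (finSuccEquiv F n).symm h
      simpa [hf_def] using this
    set j := f.natDegree with hj_def
    set L := f.coeff j with hL_def
    have hL : L ≠ 0 := by
      have := Polynomial.leadingCoeff_ne_zero.mpr hf
      rwa [Polynomial.leadingCoeff] at this
    have hdegL : L.totalDegree + j ≤ P.totalDegree :=
      totalDegree_coeff_finSuccEquiv_add_le P j hL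
    -- count zeros fiberwise
    have hcard : ((univ : Finset (Fin (n+1) → F)).filter (fun x => eval x P = 0)).card
        = ∑ s : Fin n → F, ((univ : Finset F).filter
            (fun y => eval (Fin.cons y s : Fin (n+1) → F) P = 0)).card := by
      classical
      rw [Finset.card_filter]
      rw [← Equiv.sum_comp (Fin.consEquiv (fun _ : Fin (n+1) => F))
        (fun x => if eval x P = 0 then (1:ℕ) else 0)]
      rw [Fintype.sum_prod_type, Finset.sum_comm]
      refine Finset.sum_congr rfl fun s _ => ?_
      rw [Finset.card_filter]
      rfl
    have hbound : ∀ s : Fin n → F,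
        ((univ : Finset F).filter (fun y => eval (Fin.cons y s : Fin (n+1) → F) P = 0)).card
          ≤ if eval s L = 0 then Fintype.card F else j := by
      intro s
      by_cases hs : eval s L = 0
      · rw [if_pos hs]
        simpa using Finset.card_filter_le (univ : Finset F) _
      · rw [if_neg hs]
        set g := Polynomial.map (eval s) f with hg
        have hcoef : g.coeff j ≠ 0 := by simpa [hg, Polynomial.coeff_map, ← hL_def] using hs
        have hg0 : g ≠ 0 := fun h => hcoef (by simp [h])
        have hroots : ((univ : Finset F).filter
            (fun y => eval (Fin.cons y s : Fin (n+1) → F) P = 0)) ⊆ g.roots.toFinset := by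
          intro y hy
          simp only [mem_filter, mem_univ, true_and] at hy
          rw [Multiset.mem_toFinset, Polynomial.mem_roots hg0]
          rw [eval_eq_eval_mv_eval'] at hy
          exact hy
        calc ((univ : Finset F).filter
            (fun y => eval (Fin.cons y s : Fin (n+1) → F) P = 0)).card
            ≤ g.roots.toFinset.card := Finset.card_le_card hroots
          _ ≤ Multiset.card g.roots := g.roots.toFinset_card_le
          _ ≤ g.natDegree := Polynomial.card_roots' g
          _ ≤ f.natDegree := Polynomial.natDegree_map_le
          _ = j := rfl
    have hsum : ((univ : Finset (Fin (n+1) → F)).filter (fun x => eval x P = 0)).card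
        ≤ P.totalDegree * Fintype.card F ^ n := by
      rw [hcard]
      calc ∑ s : Fin n → F, ((univ : Finset F).filter
            (fun y => eval (Fin.cons y s : Fin (n+1) → F) P = 0)).card
          ≤ ∑ s : Fin n → F, (if eval s L = 0 then Fintype.card F else j) :=
            Finset.sum_le_sum fun s _ => hbound s
        _ = ((univ : Finset (Fin n → F)).filter (fun s => eval s L = 0)).card * Fintype.card F
            + ((univ : Finset (Fin n → F)).filter (fun s => ¬ eval s L = 0)).card * j := by
            rw [Finset.sum_ite]
            simp [mul_comm]
        _ ≤ L.totalDegree * Fintype.card F ^ n + Fintype.card F ^ n * j := by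
            refine Nat.add_le_add (ih L hL) ?_
            refine Nat.mul_le_mul_right _ ?_
            calc ((univ : Finset (Fin n → F)).filter (fun s => ¬ eval s L = 0)).card
                ≤ (univ : Finset (Fin n → F)).card := Finset.card_filter_le _ _
              _ = Fintype.card F ^ n := by simp [Finset.card_univ]
        _ ≤ P.totalDegree * Fintype.card F ^ n := by
            have : L.totalDegree + j ≤ P.totalDegree := hdegL
            calc L.totalDegree * Fintype.card F ^ n + Fintype.card F ^ n * j
                = (L.totalDegree + j) * Fintype.card F ^ n := by ring
              _ ≤ P.totalDegree * Fintype.card F ^ n := Nat.mul_le_mul_right _ this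
    calc ((univ : Finset (Fin (n+1) → F)).filter (fun x => eval x P = 0)).card * Fintype.card F
        ≤ P.totalDegree * Fintype.card F ^ n * Fintype.card F := Nat.mul_le_mul_right _ hsum
      _ = P.totalDegree * Fintype.card F ^ (n+1) := by ring


open Finset MvPolynomial

variable {F : Type} [Field F] [Fintype F] [DecidableEq F]

lemma orth_one (χ : AddChar F ℂ) (hχ : χ ≠ 1) {a : F} (ha : a ≠ 0) :
    ∑ c : F, χ (c * a) = 0 := by
  have h0 : χ ≠ 0 := by
    intro h; exact hχ (by rw [h]; rfl)
  have := (AddChar.sum_eq_zero_iff_ne_zero (ψ := χ)).mpr h0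
  rw [← this]
  exact Fintype.sum_equiv (Equiv.mulRight₀ a ha) _ _ (fun c => rfl)

lemma orth (χ : AddChar F ℂ) (hχ : χ ≠ 1) {d : ℕ} (z : Fin d → F) :
    ∑ m : Fin d → F, χ (∑ i, m i * z i)
      = if z = 0 then ((Fintype.card F : ℂ) ^ d) else 0 := by
  classical
  have hfac : ∑ m : Fin d → F, χ (∑ i, m i * z i)
      = ∏ i : Fin d, ∑ c : F, χ (c * z i) := by
    rw [Finset.prod_univ_sum]
    simp only [Fintype.piFinset_univ]
    refine Finset.sum_congr rfl fun m _ => ?_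
    induction (univ : Finset (Fin d)) using Finset.cons_induction with
    | empty => simp
    | cons i s hi ihs => rw [Finset.sum_cons, Finset.prod_cons, AddChar.map_add_eq_mul, ihs]
  rw [hfac]
  rcases eq_or_ne z 0 with rfl | hz
  · simp [Finset.card_univ]
  · obtain ⟨i0, hi0⟩ : ∃ i, z i ≠ 0 := by
      by_contra h
      push_neg at h
      exact hz (funext h)
    rw [if_neg hz]
    exact Finset.prod_eq_zero (mem_univ i0) (orth_one χ hχ hi0)

lemma expand3 (χ : AddChar F ℂ) {d : ℕ} (E G H : Finset (Fin d → F)) (m : Fin d → F) :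
    ((∑ x ∈ E, χ (∑ i, m i * x i)) *
        (starRingEnd ℂ) (∑ y ∈ G, χ (∑ i, m i * y i)) *
        (starRingEnd ℂ) (∑ u ∈ H, χ (∑ i, m i * u i)))
      = ∑ x ∈ E, ∑ y ∈ G, ∑ u ∈ H, χ (∑ i, m i * (x i - y i - u i)) := by
  rw [map_sum, map_sum, Finset.sum_mul_sum, Finset.sum_mul]
  refine Finset.sum_congr rfl fun x _ => ?_
  rw [Finset.sum_mul]
  refine Finset.sum_congr rfl fun y _ => ?_
  rw [Finset.mul_sum]
  refine Finset.sum_congr rfl fun u _ => ?_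
  rw [← AddChar.map_neg_eq_conj, ← AddChar.map_neg_eq_conj,
    ← AddChar.map_add_eq_mul, ← AddChar.map_add_eq_mul]
  congr 1
  rw [← Finset.sum_neg_distrib, ← Finset.sum_neg_distrib, ← Finset.sum_add_distrib,
    ← Finset.sum_add_distrib]
  refine Finset.sum_congr rfl fun i _ => ?_
  ring

lemma key (χ : AddChar F ℂ) (hχ : χ ≠ 1) {d : ℕ} (E G H : Finset (Fin d → F)) :
    ∑ m : Fin d → F, ((∑ x ∈ E, χ (∑ i, m i * x i)) *
        (starRingEnd ℂ) (∑ y ∈ G, χ (∑ i, m i * y i)) *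
        (starRingEnd ℂ) (∑ u ∈ H, χ (∑ i, m i * u i)))
      = (Fintype.card F : ℂ) ^ d * ((E ×ˢ G).filter (fun p => p.1 - p.2 ∈ H)).card := by
  classical
  calc ∑ m : Fin d → F, ((∑ x ∈ E, χ (∑ i, m i * x i)) *
        (starRingEnd ℂ) (∑ y ∈ G, χ (∑ i, m i * y i)) *
        (starRingEnd ℂ) (∑ u ∈ H, χ (∑ i, m i * u i)))
      = ∑ m : Fin d → F, ∑ x ∈ E, ∑ y ∈ G, ∑ u ∈ H, χ (∑ i, m i * (x i - y i - u i)) :=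
        Finset.sum_congr rfl fun m _ => expand3 χ E G H m
    _ = ∑ x ∈ E, ∑ m : Fin d → F, ∑ y ∈ G, ∑ u ∈ H, χ (∑ i, m i * (x i - y i - u i)) :=
        Finset.sum_comm
    _ = ∑ x ∈ E, ∑ y ∈ G, ∑ m : Fin d → F, ∑ u ∈ H, χ (∑ i, m i * (x i - y i - u i)) :=
        Finset.sum_congr rfl fun x _ => Finset.sum_comm
    _ = ∑ x ∈ E, ∑ y ∈ G, ∑ u ∈ H, ∑ m : Fin d → F, χ (∑ i, m i * (x i - y i - u i)) :=
        Finset.sum_congr rfl fun x _ => Finset.sum_congr rfl fun y _ => Finset.sum_comm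
    _ = ∑ x ∈ E, ∑ y ∈ G, ∑ u ∈ H,
          (if u = x - y then ((Fintype.card F : ℂ) ^ d) else 0) := by
        refine Finset.sum_congr rfl fun x _ => Finset.sum_congr rfl fun y _ =>
          Finset.sum_congr rfl fun u _ => ?_
        have : ∀ i, x i - y i - u i = (x - y - u) i := fun i => rfl
        simp_rw [this]
        rw [orth χ hχ (x - y - u)]
        have hcond : (x - y - u = 0) = (u = x - y) := by
          rw [sub_eq_zero]; exact propext eq_comm
        simp only [hcond]
    _ = ∑ x ∈ E, ∑ y ∈ G, (if x - y ∈ H then ((Fintype.card F : ℂ) ^ d) else 0) := by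
        refine Finset.sum_congr rfl fun x _ => Finset.sum_congr rfl fun y _ => ?_
        rw [Finset.sum_ite_eq' H (x - y) (fun _ => ((Fintype.card F : ℂ) ^ d))]
    _ = (Fintype.card F : ℂ) ^ d * ((E ×ˢ G).filter (fun p => p.1 - p.2 ∈ H)).card := by
        rw [← Finset.sum_product']
        rw [← Finset.sum_filter]
        rw [Finset.sum_const, nsmul_eq_mul, mul_comm]

lemma parseval (χ : AddChar F ℂ) (hχ : χ ≠ 1) {d : ℕ} (S : Finset (Fin d → F)) :
    ∑ m : Fin d → F, ‖∑ x ∈ S, χ (∑ i, m i * x i)‖ ^ 2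
      = (Fintype.card F : ℝ) ^ d * S.card := by
  classical
  have hsq : ∀ m : Fin d → F, (‖∑ x ∈ S, χ (∑ i, m i * x i)‖ ^ 2 : ℂ)
      = (∑ x ∈ S, χ (∑ i, m i * x i)) * (starRingEnd ℂ) (∑ x ∈ S, χ (∑ i, m i * x i)) := by
    intro m
    rw [Complex.mul_conj]
    norm_cast
    exact Complex.sq_norm _
  have hC : ∑ m : Fin d → F, ((∑ x ∈ S, χ (∑ i, m i * x i)) *
      (starRingEnd ℂ) (∑ x ∈ S, χ (∑ i, m i * x i)))
      = (Fintype.card F : ℂ) ^ d * S.card := by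
    calc ∑ m : Fin d → F, ((∑ x ∈ S, χ (∑ i, m i * x i)) *
        (starRingEnd ℂ) (∑ x ∈ S, χ (∑ i, m i * x i)))
        = ∑ m : Fin d → F, ∑ x ∈ S, ∑ y ∈ S, χ (∑ i, m i * (x i - y i)) := by
          refine Finset.sum_congr rfl fun m _ => ?_
          rw [map_sum, Finset.sum_mul_sum]
          refine Finset.sum_congr rfl fun x _ => Finset.sum_congr rfl fun y _ => ?_
          rw [← AddChar.map_neg_eq_conj, ← AddChar.map_add_eq_mul]
          congr 1
          rw [← Finset.sum_neg_distrib, ← Finset.sum_add_distrib]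
          refine Finset.sum_congr rfl fun i _ => ?_
          ring
      _ = ∑ x ∈ S, ∑ y ∈ S, ∑ m : Fin d → F, χ (∑ i, m i * (x i - y i)) := by
          rw [Finset.sum_comm]
          exact Finset.sum_congr rfl fun x _ => Finset.sum_comm
      _ = ∑ x ∈ S, ∑ y ∈ S, (if y = x then ((Fintype.card F : ℂ) ^ d) else 0) := by
          refine Finset.sum_congr rfl fun x _ => Finset.sum_congr rfl fun y _ => ?_
          have : ∀ i, x i - y i = (x - y) i := fun i => rfl
          simp_rw [this]
          rw [orth χ hχ (x - y)]
          have hcond : (x - y = 0) = (y = x) := by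
            rw [sub_eq_zero]; exact propext eq_comm
          simp only [hcond]
      _ = (Fintype.card F : ℂ) ^ d * S.card := by
          rw [Finset.sum_congr rfl (fun x hx =>
            Finset.sum_ite_eq' S x (fun _ => ((Fintype.card F : ℂ) ^ d)))]
          rw [Finset.sum_congr rfl (fun x hx => if_pos hx), Finset.sum_const,
            nsmul_eq_mul, mul_comm]
  have := hC
  rw [← Finset.sum_congr rfl (fun m _ => hsq m)] at this
  have h2 : ((∑ m : Fin d → F, ‖∑ x ∈ S, χ (∑ i, m i * x i)‖ ^ 2 : ℝ) : ℂ)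
      = (((Fintype.card F : ℝ) ^ d * S.card : ℝ) : ℂ) := by
    push_cast
    rw [← this]
  exact_mod_cast h2

/-- Let `P ∈ 𝔽_q[x₁,…,x_d]`, `d ≥ 2`, be a nonconstant polynomial of degree
`k ≥ 1`, and `H_t = {x : P(x) = t}`.  If for some `A > 0` one has
`|Σ_{x∈H_t} χ(m·x)| ≤ A·q^{(d−1)/2}` for every `t` and every `m ≠ 0`, then for all nonempty
`E, F ⊆ 𝔽_q^d` the generalized distance set `Δ_P(E,F) = {P(x−y) : x ∈ E, y ∈ F}` satisfies
`|Δ_P(E,F)| ≥ (1/2)·min( q/k , q^{−(d−1)/2}·√(|E||F|)/A )`. -/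
theorem stmt_11 {F : Type} [Field F] [Fintype F] [DecidableEq F]
    (χ : AddChar F ℂ) (hχ : χ ≠ 1) (d : ℕ) (hd : 2 ≤ d)
    (k : ℕ) (hk : 1 ≤ k)
    (P : MvPolynomial (Fin d) F) (hdeg : P.totalDegree = k)
    (A : ℝ) (hA : 0 < A)
    (hdecay : ∀ t : F, ∀ m : Fin d → F, m ≠ 0 →
      ‖∑ x ∈ Finset.univ.filter
            (fun x : Fin d → F => MvPolynomial.eval x P = t), χ (∑ i, m i * x i)‖
        ≤ A * (Fintype.card F : ℝ) ^ (((d : ℝ) - 1) / 2))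
    (E G : Finset (Fin d → F)) (hE : E.Nonempty) (hG : G.Nonempty) :
    (1 / 2 : ℝ) * min ((Fintype.card F : ℝ) / k)
        ((Fintype.card F : ℝ) ^ (-((d : ℝ) - 1) / 2) * Real.sqrt ((E.card : ℝ) * G.card) / A)
      ≤ (((E ×ˢ G).image (fun p => MvPolynomial.eval (p.1 - p.2) P)).card : ℝ) := by
  classical
  set q : ℕ := Fintype.card F with hq
  have hq2 : 2 ≤ q := Fintype.one_lt_card
  set Q : ℝ := (q : ℝ) with hQ
  have hQ1 : (1 : ℝ) ≤ Q := by
    have h1q : 1 ≤ q := by omega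
    simp only [hQ]; exact_mod_cast h1q
  have hQ0 : (0 : ℝ) < Q := lt_of_lt_of_le one_pos hQ1
  set r : ℝ := Q ^ (((d : ℝ) - 1) / 2) with hr
  have hr0 : 0 < r := Real.rpow_pos_of_pos hQ0 _
  set Δ := (E ×ˢ G).image (fun p => MvPolynomial.eval (p.1 - p.2) P) with hΔ
  set ν : F → ℕ := fun t => ((E ×ˢ G).filter
    (fun p => MvPolynomial.eval (p.1 - p.2) P = t)).card with hν
  set H : F → Finset (Fin d → F) := fun t =>
    Finset.univ.filter (fun x => MvPolynomial.eval x P = t) with hH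
  set s : ℝ := Real.sqrt ((E.card : ℝ) * G.card) with hs
  have hX0 : (0 : ℝ) < (E.card : ℝ) * G.card := by
    have := hE.card_pos; have := hG.card_pos; positivity
  have hs0 : 0 < s := Real.sqrt_pos.mpr hX0
  have hs2 : s ^ 2 = (E.card : ℝ) * G.card := Real.sq_sqrt hX0.le
  -- Schwartz-Zippel bound on fibers
  have hSZ : ∀ t : F, ((H t).card : ℝ) * Q ≤ (k : ℝ) * Q ^ d := by
    intro t
    have hne : P - C t ≠ 0 := by
      intro h
      have : P = C t := by rwa [sub_eq_zero] at h
      rw [this, totalDegree_C] at hdeg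
      omega
    have htd : (P - C t).totalDegree ≤ k := by
      calc (P - C t).totalDegree = (P + (- C t)).totalDegree := by ring_nf
        _ ≤ max P.totalDegree (- C t).totalDegree := totalDegree_add _ _
        _ ≤ k := by
            rw [totalDegree_neg, totalDegree_C, hdeg]
            simp
    have hZ := my_sz d (P - C t) hne
    have hset : (Finset.univ.filter (fun x : Fin d → F => eval x (P - C t) = 0)) = H t := by
      refine Finset.filter_congr fun x _ => ?_
      rw [map_sub, eval_C, sub_eq_zero]
    rw [hset] at hZ
    have hfin : (H t).card * q ≤ k * q ^ d :=
      hZ.trans (Nat.mul_le_mul_right _ htd)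
    simp only [hQ]
    exact_mod_cast hfin
  -- notation for character sums
  set TE : (Fin d → F) → ℂ := fun m => ∑ x ∈ E, χ (∑ i, m i * x i) with hTE
  set TG : (Fin d → F) → ℂ := fun m => ∑ x ∈ G, χ (∑ i, m i * x i) with hTG
  set TH : F → (Fin d → F) → ℂ := fun t m => ∑ x ∈ H t, χ (∑ i, m i * x i) with hTH
  -- Cauchy-Schwarz + Parseval
  have hCS : ∑ m ∈ (Finset.univ.erase (0 : Fin d → F)),
      ‖TE m‖ * ‖TG m‖ ≤ Q ^ d * s := by
    have h1 : (∑ m ∈ (Finset.univ.erase (0 : Fin d → F)),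
        ‖TE m‖ * ‖TG m‖) ^ 2
        ≤ (∑ m ∈ (Finset.univ.erase (0 : Fin d → F)), ‖TE m‖ ^ 2)
          * (∑ m ∈ (Finset.univ.erase (0 : Fin d → F)), ‖TG m‖ ^ 2) :=
      Finset.sum_mul_sq_le_sq_mul_sq _ _ _
    have h2 : (∑ m ∈ (Finset.univ.erase (0 : Fin d → F)), ‖TE m‖ ^ 2)
        ≤ Q ^ d * E.card := by
      rw [← parseval χ hχ E]
      exact Finset.sum_le_sum_of_subset_of_nonneg (Finset.subset_univ _)
        (fun _ _ _ => by positivity)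
    have h3 : (∑ m ∈ (Finset.univ.erase (0 : Fin d → F)), ‖TG m‖ ^ 2)
        ≤ Q ^ d * G.card := by
      rw [← parseval χ hχ G]
      exact Finset.sum_le_sum_of_subset_of_nonneg (Finset.subset_univ _)
        (fun _ _ _ => by positivity)
    have h4 : (∑ m ∈ (Finset.univ.erase (0 : Fin d → F)),
        ‖TE m‖ * ‖TG m‖) ^ 2 ≤ (Q ^ d * s) ^ 2 := by
      calc _ ≤ _ := h1
        _ ≤ (Q ^ d * E.card) * (Q ^ d * G.card) := by
            apply mul_le_mul h2 h3 (Finset.sum_nonneg fun _ _ => by positivity) (by positivity)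
        _ = (Q ^ d * s) ^ 2 := by rw [mul_pow, hs2]; ring
    have h5 : 0 ≤ ∑ m ∈ (Finset.univ.erase (0 : Fin d → F)),
        ‖TE m‖ * ‖TG m‖ :=
      Finset.sum_nonneg fun _ _ => by positivity
    nlinarith [h4, h5, mul_pos (pow_pos hQ0 d) hs0]
  -- pointwise bound
  have hpoint : ∀ t : F, Q ^ d * ν t ≤
      (E.card : ℝ) * G.card * (H t).card + A * r * (Q ^ d * s) := by
    intro t
    have hkey := key χ hχ E G (H t)
    have hfilt : ((E ×ˢ G).filter (fun p => p.1 - p.2 ∈ H t)) =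
        ((E ×ˢ G).filter (fun p => MvPolynomial.eval (p.1 - p.2) P = t)) := by
      refine Finset.filter_congr fun p _ => ?_
      simp [hH]
    rw [hfilt] at hkey
    set f3 : (Fin d → F) → ℂ := fun m => TE m * (starRingEnd ℂ) (TG m) * (starRingEnd ℂ) (TH t m) with hf3
    have habs : Q ^ d * ν t = ‖∑ m : Fin d → F, f3 m‖ := by
      rw [hf3]
      rw [hkey, norm_mul, norm_pow]
      simp only [Complex.norm_natCast]
      rfl
    have h0 : ‖f3 0‖ = (E.card : ℝ) * G.card * (H t).card := by
      have e1 : TE 0 = (E.card : ℂ) := by simp [hTE]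
      have e2 : TG 0 = (G.card : ℂ) := by simp [hTG]
      have e3 : TH t 0 = ((H t).card : ℂ) := by simp [hTH]
      rw [hf3]
      simp only [e1, e2, e3]
      simp [Complex.norm_natCast]
    have hterm : ∀ m ∈ (Finset.univ.erase (0 : Fin d → F)), ‖f3 m‖ ≤ (‖TE m‖ * ‖TG m‖) * (A * r) := by
      intro m hm
      have hm0 : m ≠ 0 := Finset.ne_of_mem_erase hm
      rw [hf3]
      simp only []
      rw [norm_mul, norm_mul, Complex.norm_conj, Complex.norm_conj]
      have hd2 := hdecay t m hm0
      calc ‖TE m‖ * ‖TG m‖ * ‖TH t m‖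
          = ‖TE m‖ * (‖TG m‖ * ‖TH t m‖) := by ring
        _ ≤ ‖TE m‖ * (‖TG m‖ * (A * r)) :=
            mul_le_mul_of_nonneg_left (mul_le_mul_of_nonneg_left hd2 (norm_nonneg _)) (norm_nonneg _)
        _ = ‖TE m‖ * ‖TG m‖ * (A * r) := by ring
    have hrest : ∑ m ∈ (Finset.univ.erase (0 : Fin d → F)), ‖f3 m‖ ≤ A * r * (Q ^ d * s) := by
      have s1 : ∑ m ∈ (Finset.univ.erase (0 : Fin d → F)), ‖f3 m‖ ≤ ∑ m ∈ (Finset.univ.erase (0 : Fin d → F)), (‖TE m‖ * ‖TG m‖) * (A * r) :=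
        Finset.sum_le_sum hterm
      have s2 : ∑ m ∈ (Finset.univ.erase (0 : Fin d → F)), (‖TE m‖ * ‖TG m‖) * (A * r) = (∑ m ∈ (Finset.univ.erase (0 : Fin d → F)), ‖TE m‖ * ‖TG m‖) * (A * r) := by
        rw [← Finset.sum_mul]
      have hAr : (0:ℝ) ≤ A * r := by positivity
      have s3 := mul_le_mul_of_nonneg_right hCS hAr
      calc ∑ m ∈ (Finset.univ.erase (0 : Fin d → F)), ‖f3 m‖ ≤ _ := s1
        _ = _ := s2
        _ ≤ (Q ^ d * s) * (A * r) := s3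
        _ = A * r * (Q ^ d * s) := by ring
    have hsplit : ∑ m : Fin d → F, ‖f3 m‖ = ‖f3 0‖ + ∑ m ∈ (Finset.univ.erase (0 : Fin d → F)), ‖f3 m‖ := by
      rw [← Finset.add_sum_erase _ _ (Finset.mem_univ 0)]
    have htri : ‖∑ m : Fin d → F, f3 m‖ ≤ ∑ m : Fin d → F, ‖f3 m‖ :=
      norm_sum_le _ _
    rw [habs]
    rw [hsplit] at htri
    calc ‖∑ m : Fin d → F, f3 m‖ ≤ ‖f3 0‖ + ∑ m ∈ (Finset.univ.erase (0 : Fin d → F)), ‖f3 m‖ := htri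
      _ ≤ (E.card : ℝ) * G.card * (H t).card + A * r * (Q ^ d * s) := by
          rw [h0]
          exact add_le_add_right hrest _
  -- counting identity
  have hcount : (E.card : ℝ) * G.card = ∑ t ∈ Δ, (ν t : ℝ) := by
    have := Finset.card_eq_sum_card_image
      (fun p : (Fin d → F) × (Fin d → F) => MvPolynomial.eval (p.1 - p.2) P) (E ×ˢ G)
    rw [Finset.card_product] at this
    push_cast [hν, hΔ]
    exact_mod_cast congrArg (Nat.cast (R := ℝ)) this
  -- master inequality
  have hmaster : Q ^ (d+1) * ((E.card : ℝ) * G.card)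
      ≤ (Δ.card : ℝ) * ((E.card : ℝ) * G.card * ((k : ℝ) * Q ^ d)
          + A * r * (Q ^ (d+1) * s)) := by
    have step : ∀ t ∈ Δ, Q ^ (d+1) * (ν t : ℝ)
        ≤ (E.card : ℝ) * G.card * ((k : ℝ) * Q ^ d) + A * r * (Q ^ (d+1) * s) := by
      intro t _
      have h1 := hpoint t
      have h2 := hSZ t
      have := mul_le_mul_of_nonneg_right h1 hQ0.le
      calc Q ^ (d+1) * (ν t : ℝ) = (Q ^ d * ν t) * Q := by ring
        _ ≤ ((E.card : ℝ) * G.card * (H t).card + A * r * (Q ^ d * s)) * Q := this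
        _ = (E.card : ℝ) * G.card * ((H t).card * Q) + A * r * (Q ^ d * Q * s) := by ring
        _ ≤ (E.card : ℝ) * G.card * ((k : ℝ) * Q ^ d) + A * r * (Q ^ (d+1) * s) := by
            have hEG : (0:ℝ) ≤ (E.card : ℝ) * G.card := hX0.le
            have := mul_le_mul_of_nonneg_left h2 hEG
            rw [pow_succ]
            exact add_le_add this (le_of_eq (by ring))
    calc Q ^ (d+1) * ((E.card : ℝ) * G.card) = ∑ t ∈ Δ, Q ^ (d+1) * (ν t : ℝ) := by
          rw [hcount, Finset.mul_sum]
      _ ≤ ∑ t ∈ Δ, ((E.card : ℝ) * G.card * ((k : ℝ) * Q ^ d) + A * r * (Q ^ (d+1) * s)) :=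
          Finset.sum_le_sum step
      _ = (Δ.card : ℝ) * ((E.card : ℝ) * G.card * ((k : ℝ) * Q ^ d)
          + A * r * (Q ^ (d+1) * s)) := by
          rw [Finset.sum_const, nsmul_eq_mul]
  -- final arithmetic
  set X := ((E.card : ℝ) * (G.card : ℝ)) with hXdef
  set B := X * ((k : ℝ) * Q ^ d) + A * r * (Q ^ (d+1) * s) with hB
  have hB0 : 0 < B := by
    have hk0 : (0:ℝ) < k := by exact_mod_cast hk
    have : 0 < X * ((k : ℝ) * Q ^ d) := by positivity
    have h2 : 0 < A * r * (Q ^ (d+1) * s) := by positivity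
    linarith
  set M := min (Q / k) (Q ^ (-((d : ℝ) - 1) / 2) * s / A) with hM
  have hMB : M * B ≤ 2 * (Q ^ (d+1) * X) := by
    have hrinv : Q ^ (-((d : ℝ) - 1) / 2) = r⁻¹ := by
      rw [neg_div, Real.rpow_neg hQ0.le, hr]
    have hk0 : (0:ℝ) < k := by exact_mod_cast hk
    have t1 : M * (X * ((k : ℝ) * Q ^ d)) ≤ Q ^ (d+1) * X := by
      have : M ≤ Q / k := min_le_left _ _
      calc M * (X * ((k : ℝ) * Q ^ d)) ≤ (Q / k) * (X * ((k : ℝ) * Q ^ d)) := by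
            refine mul_le_mul_of_nonneg_right this (by positivity)
        _ = Q ^ (d+1) * X := by field_simp; ring
    have t2 : M * (A * r * (Q ^ (d+1) * s)) ≤ Q ^ (d+1) * X := by
      have hmle : M ≤ Q ^ (-((d : ℝ) - 1) / 2) * s / A := min_le_right _ _
      calc M * (A * r * (Q ^ (d+1) * s))
          ≤ (Q ^ (-((d : ℝ) - 1) / 2) * s / A) * (A * r * (Q ^ (d+1) * s)) := by
            refine mul_le_mul_of_nonneg_right hmle (by positivity)
        _ = Q ^ (d+1) * X := by
            rw [hrinv, ← hs2]
            field_simp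
    calc M * B = M * (X * ((k : ℝ) * Q ^ d)) + M * (A * r * (Q ^ (d+1) * s)) := by
          rw [hB]; ring
      _ ≤ Q ^ (d+1) * X + Q ^ (d+1) * X := add_le_add t1 t2
      _ = 2 * (Q ^ (d+1) * X) := by ring
  have hfin : M ≤ 2 * (Δ.card : ℝ) := by
    have h1 : M * B ≤ 2 * ((Δ.card : ℝ) * B) := by
      calc M * B ≤ 2 * (Q ^ (d+1) * X) := hMB
        _ ≤ 2 * ((Δ.card : ℝ) * B) := by linarith [hmaster]
    have := le_of_mul_le_mul_right (by linarith : M * B ≤ (2 * (Δ.card : ℝ)) * B) hB0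
    exact this
  linarith
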